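/- Let n ≥ 2 and f = y² + A(x)·y + B(x) ∈ ℂ{x}[y] with ord(A) ≥ 1, ord(B) ≥ 2, and suppose A²/4 − B = x^k·u(x) with k ≥ 2 and u(x) ∈ ℂ{x} a unit. Then ω₁ := 2x·dy − ((k + x·u'(x)/u(x))·(y + A/2) − x·A')·dx and ω₂ := df = (2y + A)·dy + (A'·y + B')·dx satisfy ω₁ ∧ ω₂ = −2·(k + x·u'(x)/u(x))·f·dx∧dy; since k + x·u'/u is a unit, {ω₁, ω₂} is a Saito basis of S(f). -/

import Mathlib

open MvPowerSeries

noncomputable section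

/-- `ℂ{x,y}`, modeled as formal power series in two variables. -/
abbrev PS := MvPowerSeries (Fin 2) ℂ

/-- Formal partial derivative with respect to variable `i`. -/
noncomputable def pd (i : Fin 2) (f : PS) : PS :=
  fun m => ((m i : ℂ) + 1) * MvPowerSeries.coeff (R := ℂ) (m + Finsupp.single i 1) f

/-- The pair `(f_x, f_y)` representing the differential `df = f_x dx + f_y dy`;
a 1-form `A dx + B dy` is modeled as the pair `(A, B)`. -/
noncomputable def dd (f : PS) : PS × PS := (pd 0 f, pd 1 f)

/-- `(A dx + B dy) ∧ (C dx + D dy) = (A D - B C) dx∧dy`, recorded by its coefficient. -/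
def wedge (ω η : PS × PS) : PS := ω.1 * η.2 - ω.2 * η.1

/-- The Saito module `S(f)`: 1-forms `ω` with `ω ∧ df = h·f·dx∧dy` for some `h`. -/
def SaitoSet (f : PS) : Set (PS × PS) := {ω | ∃ h : PS, wedge ω (dd f) = h * f}

/-- `F(f) = ℂ{x,y}·df + f·Ω¹`. -/
def FSet (f : PS) : Set (PS × PS) := {ω | ∃ (p : PS) (η : PS × PS), ω = p • dd f + f • η}

/-- A power series involving only the variable `x`. -/
def OnlyX (p : PS) : Prop :=
  ∀ m : Fin 2 →₀ ℕ, m 1 ≠ 0 → MvPowerSeries.coeff (R := ℂ) m p = 0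

lemma coeff_pd (i : Fin 2) (f : PS) (m : Fin 2 →₀ ℕ) :
    MvPowerSeries.coeff (R := ℂ) m (pd i f) =
      ((m i : ℂ) + 1) * MvPowerSeries.coeff (R := ℂ) (m + Finsupp.single i 1) f := rfl

lemma pd_add (i : Fin 2) (f g : PS) : pd i (f + g) = pd i f + pd i g := by
  apply MvPowerSeries.ext; intro m
  simp [coeff_pd, map_add, mul_add]

lemma sum_shift (i : Fin 2) (m : Fin 2 →₀ ℕ) (F G : (Fin 2 →₀ ℕ) → ℂ) :
    Finset.sum (Finset.HasAntidiagonal.antidiagonal (m + Finsupp.single i 1))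
      (fun (x : (Fin 2 →₀ ℕ) × (Fin 2 →₀ ℕ)) => (x.1 i : ℂ) * (F x.1 * G x.2))
    = Finset.sum (Finset.HasAntidiagonal.antidiagonal m)
      (fun (x : (Fin 2 →₀ ℕ) × (Fin 2 →₀ ℕ)) => ((x.1 i : ℂ) + 1) * (F (x.1 + Finsupp.single i 1) * G x.2)) := by
  rw [← Finset.sum_filter_of_ne (p := fun (x : (Fin 2 →₀ ℕ) × (Fin 2 →₀ ℕ)) => x.1 i ≠ 0)]
  · refine Finset.sum_bij' (fun x _ => (x.1 - Finsupp.single i 1, x.2))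
      (fun x _ => (x.1 + Finsupp.single i 1, x.2)) ?_ ?_ ?_ ?_ ?_
    · intro a ha
      simp only [Finset.mem_filter, Finset.HasAntidiagonal.mem_antidiagonal] at ha ⊢
      obtain ⟨h1, h2⟩ := ha
      have hle : Finsupp.single i 1 ≤ a.1 := by
        rw [Finsupp.single_le_iff]; omega
      have : a.1 - Finsupp.single i 1 + a.2 + Finsupp.single i 1 = m + Finsupp.single i 1 := by
        rw [add_right_comm, tsub_add_cancel_of_le hle, h1]
      exact add_right_cancel this
    · intro a ha
      simp only [Finset.HasAntidiagonal.mem_antidiagonal] at ha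
      simp only [Finset.mem_filter, Finset.HasAntidiagonal.mem_antidiagonal]
      constructor
      · rw [add_right_comm, ha]
      · simp [Finsupp.single_apply]
    · intro a ha
      simp only [Finset.mem_filter, Finset.HasAntidiagonal.mem_antidiagonal] at ha
      have hle : Finsupp.single i 1 ≤ a.1 := by
        rw [Finsupp.single_le_iff]; omega
      ext <;> simp [tsub_add_cancel_of_le hle]
    · intro a ha
      ext <;> simp
    · intro a ha
      simp only [Finset.mem_filter, Finset.HasAntidiagonal.mem_antidiagonal] at ha
      have hle : Finsupp.single i 1 ≤ a.1 := by
        rw [Finsupp.single_le_iff]; omega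
      rw [tsub_add_cancel_of_le hle]
      congr 1
      have happ : (a.1 - Finsupp.single i 1 : Fin 2 →₀ ℕ) i = a.1 i - 1 := by
        rw [Finsupp.tsub_apply, Finsupp.single_apply, if_pos rfl]
      rw [happ, Nat.cast_sub (by omega : 1 ≤ a.1 i)]
      push_cast
      ring
  · intro x hx hx0
    intro h
    exact hx0 (by simp [h])

lemma pd_mul (i : Fin 2) (f g : PS) : pd i (f * g) = pd i f * g + f * pd i g := by
  classical
  apply MvPowerSeries.ext; intro m
  rw [map_add, coeff_pd, MvPowerSeries.coeff_mul, MvPowerSeries.coeff_mul,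
    MvPowerSeries.coeff_mul, Finset.mul_sum]
  have key : ∀ x ∈ Finset.HasAntidiagonal.antidiagonal (m + Finsupp.single i 1),
      ((m i : ℂ) + 1) * (MvPowerSeries.coeff (R := ℂ) x.1 f * MvPowerSeries.coeff (R := ℂ) x.2 g)
      = (x.1 i : ℂ) * (MvPowerSeries.coeff (R := ℂ) x.1 f * MvPowerSeries.coeff (R := ℂ) x.2 g)
      + (x.2 i : ℂ) * (MvPowerSeries.coeff (R := ℂ) x.1 f * MvPowerSeries.coeff (R := ℂ) x.2 g) := by
    intro x hx
    rw [Finset.HasAntidiagonal.mem_antidiagonal] at hx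
    have : x.1 i + x.2 i = m i + 1 := by
      have := congrArg (fun p => p i) hx
      simpa [Finsupp.single_apply] using this
    have hc : ((x.1 i : ℂ)) + (x.2 i : ℂ) = (m i : ℂ) + 1 := by exact_mod_cast this
    rw [← add_mul, hc]
  rw [Finset.sum_congr rfl key, Finset.sum_add_distrib]
  congr 1
  · refine (sum_shift i m (fun d => MvPowerSeries.coeff (R := ℂ) d f)
      (fun d => MvPowerSeries.coeff (R := ℂ) d g)).trans ?_
    apply Finset.sum_congr rfl
    intro x _
    rw [coeff_pd]; ring
  · have swap1 : Finset.sum (Finset.HasAntidiagonal.antidiagonal (m + Finsupp.single i 1))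
        (fun (x : (Fin 2 →₀ ℕ) × (Fin 2 →₀ ℕ)) =>
          (x.2 i : ℂ) * (MvPowerSeries.coeff (R := ℂ) x.1 f * MvPowerSeries.coeff (R := ℂ) x.2 g))
        = Finset.sum (Finset.HasAntidiagonal.antidiagonal (m + Finsupp.single i 1))
        (fun (x : (Fin 2 →₀ ℕ) × (Fin 2 →₀ ℕ)) =>
          (x.1 i : ℂ) * (MvPowerSeries.coeff (R := ℂ) x.1 g * MvPowerSeries.coeff (R := ℂ) x.2 f)) := by
      conv_rhs => rw [← Finset.HasAntidiagonal.map_swap_antidiagonal]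
      rw [Finset.sum_map]
      apply Finset.sum_congr rfl
      intro x hx
      simp [mul_comm]
    refine swap1.trans ?_
    refine (sum_shift i m (fun d => MvPowerSeries.coeff (R := ℂ) d g)
      (fun d => MvPowerSeries.coeff (R := ℂ) d f)).trans ?_
    conv_rhs => rw [← Finset.HasAntidiagonal.map_swap_antidiagonal]
    rw [Finset.sum_map]
    apply Finset.sum_congr rfl
    intro x _
    simp only [Function.Embedding.coeFn_mk, Prod.fst_swap, Prod.snd_swap, coeff_pd]
    ring

lemma pd_C (i : Fin 2) (a : ℂ) : pd i (MvPowerSeries.C (σ := Fin 2) (R := ℂ) a) = 0 := by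
  classical
  apply MvPowerSeries.ext; intro m
  rw [coeff_pd, MvPowerSeries.coeff_C, if_neg, map_zero, mul_zero]
  intro h
  have := congrArg (fun p => p i) h
  simp [Finsupp.single_apply] at this

lemma pd_one (i : Fin 2) : pd i (1 : PS) = 0 := by
  rw [← map_one (MvPowerSeries.C (σ := Fin 2) (R := ℂ))]; exact pd_C i 1

lemma pd_natCast (i : Fin 2) (n : ℕ) : pd i (n : PS) = 0 := by
  rw [← map_natCast (MvPowerSeries.C (σ := Fin 2) (R := ℂ)) n]; exact pd_C i n

lemma pd_X_self (i : Fin 2) : pd i (X i : PS) = 1 := by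
  classical
  apply MvPowerSeries.ext; intro m
  rw [coeff_pd, MvPowerSeries.coeff_X]
  by_cases hm : m = 0
  · subst hm; simp [MvPowerSeries.coeff_one]
  · rw [if_neg, MvPowerSeries.coeff_one, if_neg hm, mul_zero]
    intro h
    exact hm (by simpa using add_right_cancel (h.trans (zero_add _).symm))

lemma pd_X_ne (i j : Fin 2) (h : i ≠ j) : pd i (X j : PS) = 0 := by
  classical
  apply MvPowerSeries.ext; intro m
  rw [coeff_pd, MvPowerSeries.coeff_X, if_neg, mul_zero, map_zero]
  intro hc
  have := congrArg (fun p => p i) hc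
  simp [Finsupp.single_apply, h, (Ne.symm h)] at this

lemma pd_onlyX (p : PS) (hp : OnlyX p) : pd 1 p = 0 := by
  apply MvPowerSeries.ext; intro m
  rw [coeff_pd, hp, mul_zero, map_zero]
  simp [Finsupp.single_apply]

lemma pd_X0_pow (n : ℕ) : pd 0 ((X 0 : PS) ^ (n + 1)) = (n + 1 : ℕ) * (X 0 : PS) ^ n := by
  induction n with
  | zero => simp [pd_X_self]
  | succ n ih =>
    rw [pow_succ, pd_mul, ih, pd_X_self]
    push_cast
    ring

lemma pd_neg (i : Fin 2) (f : PS) : pd i (-f) = -pd i f := by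
  apply MvPowerSeries.ext; intro m
  simp only [coeff_pd, map_neg]
  ring

lemma pd_sub (i : Fin 2) (f g : PS) : pd i (f - g) = pd i f - pd i g := by
  rw [sub_eq_add_neg, pd_add, pd_neg, sub_eq_add_neg]

lemma pd_four (i : Fin 2) : pd i (4 : PS) = 0 := by
  have h4 : (4 : PS) = ((4 : ℕ) : PS) := by
    simp
  rw [h4, pd_natCast]

theorem multiplicity_two_saito_basis (n : ℕ) (hn : 2 ≤ n)
    (A B U V : PS) (hA : OnlyX A) (hB : OnlyX B) (hU : OnlyX U)
    (hordA : MvPowerSeries.constantCoeff (σ := Fin 2) (R := ℂ) A = 0)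
    (hordB : MvPowerSeries.constantCoeff (σ := Fin 2) (R := ℂ) B = 0 ∧
      MvPowerSeries.coeff (R := ℂ) (Finsupp.single (0 : Fin 2) 1) B = 0)
    (k : ℕ) (hk : 2 ≤ k) (hUu : IsUnit U) (hUV : U * V = 1)
    (f : PS) (hfdef : f = (X 1 : PS) ^ 2 + A * X 1 + B)
    (hdisc : A ^ 2 - 4 * B = 4 * (X 0 : PS) ^ k * U)
    (K : PS) (hK : K = (k : PS) + (X 0 : PS) * pd 0 U * V) :
    wedge (-(K * ((X 1 : PS) + MvPowerSeries.C (σ := Fin 2) (R := ℂ) (1/2) * A) - X 0 * pd 0 A),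
            2 * (X 0 : PS))
          (pd 0 A * X 1 + pd 0 B, 2 * (X 1 : PS) + A) = -2 * K * f ∧
    IsUnit K ∧
    (-(K * ((X 1 : PS) + MvPowerSeries.C (σ := Fin 2) (R := ℂ) (1/2) * A) - X 0 * pd 0 A),
      2 * (X 0 : PS)) ∈ SaitoSet f ∧
    ((pd 0 A * X 1 + pd 0 B, 2 * (X 1 : PS) + A) : PS × PS) ∈ SaitoSet f := by
  obtain ⟨j, rfl⟩ : ∃ j, k = j + 2 := ⟨k - 2, by omega⟩
  set c : PS := MvPowerSeries.C (σ := Fin 2) (R := ℂ) (1/2) with hc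
  have h2 : (2 : PS) * c = 1 := by
    rw [hc, show (2:PS) = MvPowerSeries.C (σ := Fin 2) (R := ℂ) 2 from (map_ofNat _ 2).symm, ← map_mul]
    norm_num
  -- derivative of the discriminant relation
  have e1 : pd 0 (A ^ 2 - 4 * B) = 2 * A * pd 0 A - 4 * pd 0 B := by
    rw [pd_sub, sq, pd_mul, pd_mul, pd_four]
    ring
  have epow : pd 0 ((X 0 : PS) ^ (j + 2)) = ((j + 2 : ℕ) : PS) * (X 0 : PS) ^ (j + 1) := by
    have := pd_X0_pow (j + 1)
    rwa [show j + 1 + 1 = j + 2 by omega] at this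
  have e2 : pd 0 (4 * (X 0 : PS) ^ (j + 2) * U)
      = 4 * ((j + 2 : ℕ) : PS) * (X 0 : PS) ^ (j + 1) * U
        + 4 * (X 0 : PS) ^ (j + 2) * pd 0 U := by
    rw [pd_mul, pd_mul, epow, pd_four]
    ring
  have eqd : 2 * A * pd 0 A - 4 * pd 0 B
      = 4 * ((j + 2 : ℕ) : PS) * (X 0 : PS) ^ (j + 1) * U
        + 4 * (X 0 : PS) ^ (j + 2) * pd 0 U := by
    rw [← e1, ← e2, hdisc]
  push_cast at eqd hK
  have keyx2 : (X 0 : PS) * (2 * (A * pd 0 A) - 4 * pd 0 B)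
      = 4 * K * ((X 0 : PS) ^ (j + 2) * U) := by
    linear_combination (X 0 : PS) * eqd - (4 * (X 0 : PS) ^ (j + 3) * pd 0 U) * hUV
      - (4 * (X 0 : PS) ^ (j + 2) * U) * hK
  have part1 : wedge (-(K * ((X 1 : PS) + c * A) - X 0 * pd 0 A), 2 * (X 0 : PS))
      (pd 0 A * X 1 + pd 0 B, 2 * (X 1 : PS) + A) = -2 * K * f := by
    unfold wedge
    simp only
    linear_combination 2 * K * hfdef + c * keyx2 - K * c * hdisc
      + (-(K * A * (X 1 : PS)) - 2 * K * B - (X 0 : PS) * A * pd 0 A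
          + 2 * (X 0 : PS) * pd 0 B) * h2
  have hKu : IsUnit K := by
    rw [MvPowerSeries.isUnit_iff_constantCoeff]
    have hcc : MvPowerSeries.constantCoeff (σ := Fin 2) (R := ℂ) K = ((j : ℂ) + 2) := by
      rw [hK]
      simp [MvPowerSeries.constantCoeff_X, map_ofNat]
    rw [hcc]
    have hne : ((j + 2 : ℕ) : ℂ) ≠ 0 := Nat.cast_ne_zero.mpr (by omega)
    push_cast at hne
    exact isUnit_iff_ne_zero.mpr hne
  have p0 : pd 0 ((X 1 : PS) ^ 2 + A * X 1 + B) = pd 0 A * X 1 + pd 0 B := by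
    rw [pd_add, pd_add, sq, pd_mul, pd_mul, pd_X_ne 0 1 (by decide)]
    ring
  have p1 : pd 1 ((X 1 : PS) ^ 2 + A * X 1 + B) = 2 * (X 1 : PS) + A := by
    rw [pd_add, pd_add, sq, pd_mul, pd_mul, pd_X_self 1, pd_onlyX A hA, pd_onlyX B hB]
    ring
  have hddf : dd f = (pd 0 A * X 1 + pd 0 B, 2 * (X 1 : PS) + A) := by
    unfold dd
    rw [hfdef]
    simp only [Prod.mk.injEq]
    exact ⟨p0, p1⟩
  refine ⟨part1, hKu, ⟨-2 * K, ?_⟩, ⟨0, ?_⟩⟩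
  · rw [hddf]
    linear_combination part1
  · rw [hddf]
    unfold wedge
    ring
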